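/- arXiv:2505.04848 — 2 statements merged into one kernel-verified Lean document; each statement's English description precedes it below -/
import Mathlib

section
/- Let k be an algebraically closed field and let A be a nontrivial finitely generated commutative k-algebra. The following are equivalent: (1) the prime spectrum of A consists of exactly one point; (2) A is a local ring; (3) A is a local ring that is finite-dimensional as a k-vector space; (4) A has a unique prime ideal, and this prime ideal is nilpotent. -/
lemma aux_prime_eq_max {A : Type*} [CommRing A] [IsJacobsonRing A] [IsLocalRing A]
    (Q : Ideal A) (hQ : Q.IsPrime) : Q = IsLocalRing.maximalIdeal A := by
  have h1 : Q.jacobson = Q := IsJacobsonRing.out' Q hQ.isRadical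
  rw [← h1, Ideal.jacobson]
  apply le_antisymm
  · exact sInf_le ⟨IsLocalRing.le_maximalIdeal hQ.ne_top, IsLocalRing.maximalIdeal.isMaximal A⟩
  · exact le_sInf (by rintro J ⟨hQJ, hJ⟩; rw [IsLocalRing.eq_maximalIdeal hJ])

/-- For a nontrivial finitely generated commutative algebra `A` over an algebraically closed
field `k`, the following are equivalent:
(1) `Spec A` has exactly one point;
(2) `A` is a local ring;
(3) `A` is a local ring of finite length, i.e. finite-dimensional over `k`;
(4) `A` has a unique prime ideal and this prime ideal is nilpotent. -/
theorem stmt8 (k A : Type*) [Field k] [IsAlgClosed k] [CommRing A] [Nontrivial A]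
    [Algebra k A] [Algebra.FiniteType k A] :
    List.TFAE
      [∃ x : PrimeSpectrum A, ∀ y : PrimeSpectrum A, y = x,
        IsLocalRing A,
        IsLocalRing A ∧ FiniteDimensional k A,
        ∃ P : Ideal A, P.IsPrime ∧ IsNilpotent P ∧ ∀ Q : Ideal A, Q.IsPrime → Q = P] := by
  have hNoeth : IsNoetherianRing A := Algebra.FiniteType.isNoetherianRing k A
  have hJac : IsJacobsonRing A := isJacobsonRing_of_finiteType (A := k)
  tfae_have 1 → 4 := by
    rintro ⟨x, hx⟩
    refine ⟨x.asIdeal, x.isPrime, ?_, fun Q hQ => congrArg PrimeSpectrum.asIdeal (hx ⟨Q, hQ⟩)⟩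
    have h : x.asIdeal = nilradical A := by
      rw [nilradical_eq_sInf]
      apply le_antisymm
      · exact le_sInf fun J hJ => le_of_eq (congrArg PrimeSpectrum.asIdeal (hx ⟨J, hJ⟩)).symm
      · exact sInf_le x.isPrime
    rw [h]
    exact IsNoetherianRing.isNilpotent_nilradical A
  tfae_have 4 → 2 := by
    rintro ⟨P, hP, _, hPuniq⟩
    obtain ⟨M, hM⟩ := Ideal.exists_maximal A
    refine IsLocalRing.of_unique_max_ideal ⟨M, hM, fun J hJ => ?_⟩
    rw [hPuniq J hJ.isPrime, hPuniq M hM.isPrime]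
  tfae_have 2 → 1 := by
    intro h
    exact ⟨⟨IsLocalRing.maximalIdeal A, Ideal.IsMaximal.isPrime inferInstance⟩,
      fun y => PrimeSpectrum.ext (aux_prime_eq_max y.asIdeal y.isPrime)⟩
  tfae_have 2 → 3 := by
    intro h
    refine ⟨h, ?_⟩
    set m := IsLocalRing.maximalIdeal A with hm
    have hnil : IsNilpotent m := by
      have h2 : m = nilradical A := by
        rw [nilradical_eq_sInf]
        apply le_antisymm
        · exact le_sInf fun J hJ => le_of_eq (aux_prime_eq_max J hJ).symm
        · exact sInf_le (Ideal.IsMaximal.isPrime inferInstance)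
      rw [h2]; exact IsNoetherianRing.isNilpotent_nilradical A
    obtain ⟨n, hn⟩ := hnil
    letI : Field (A ⧸ m) := Ideal.Quotient.field m
    have hfin : Module.Finite k (A ⧸ m) :=
      finite_of_finite_type_of_isJacobsonRing k (A ⧸ m)
    have hint : Algebra.IsIntegral k (A ⧸ m) := Algebra.IsIntegral.of_finite k (A ⧸ m)
    have hintA : Algebra.IsIntegral k A := by
      constructor
      intro a
      obtain ⟨p, hpm, hp0⟩ := hint.isIntegral (Ideal.Quotient.mk m a)
      refine ⟨p ^ n, hpm.pow n, ?_⟩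
      have : Polynomial.aeval a p ∈ m := by
        rw [← Ideal.Quotient.eq_zero_iff_mem]
        show Ideal.Quotient.mkₐ k m (Polynomial.aeval a p) = 0
        rw [← Polynomial.aeval_algHom_apply]
        simpa [Polynomial.aeval_def, Ideal.Quotient.mkₐ_eq_mk] using hp0
      have hmem : (Polynomial.aeval a p) ^ n ∈ m ^ n := Ideal.pow_mem_pow this n
      rw [hn] at hmem
      simpa [map_pow, Polynomial.aeval_def] using (Ideal.mem_bot.mp hmem)
    exact Algebra.IsIntegral.finite
  tfae_have 3 → 2 := fun h => h.1
  tfae_finish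
end

section
/- Let k be a field, H a commutative Hopf algebra over k, and A a right H-comodule algebra with structure map ρ : A → A ⊗_k H. Regard A ⊗_k H as a right A-module via (x ⊗ h)·a = Σ x·a₍₀₎ ⊗ h·a₍₁₎ (Sweedler notation ρ(a) = Σ a₍₀₎ ⊗ a₍₁₎) and as a right H-comodule via id_A ⊗ Δ. Then there exists a total integral φ : H → A if and only if there exists a k-linear map ψ : A ⊗_k H → A that is simultaneously a morphism of right A-modules and of right H-comodules and satisfies ψ ∘ ρ = id_A. -/
open TensorProduct LinearMap

set_option synthInstance.maxHeartbeats 1000000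
set_option maxHeartbeats 1600000

section Aux

variable {k H A : Type*} [Field k] [CommRing H] [HopfAlgebra k H]
    [CommRing A] [Algebra k A] (ρ : A →ₐ[k] A ⊗[k] H)

/-- `gmap ρ f (a ⊗ h) = ∑ a₀ ⊗ f(a₁) * h`. -/
noncomputable def gmap (f : H →ₗ[k] H) : A ⊗[k] H →ₗ[k] A ⊗[k] H :=
  (lTensor A ((LinearMap.mul' k H) ∘ₗ rTensor H f)) ∘ₗ
    (TensorProduct.assoc k A H H).toLinearMap ∘ₗ (rTensor H ρ.toLinearMap)

lemma gmap_tmul (f : H →ₗ[k] H) (a : A) (h : H) :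
    gmap ρ f (a ⊗ₜ h) = lTensor A ((LinearMap.mulRight k h) ∘ₗ f) (ρ a) := by
  have key : ∀ w : A ⊗[k] H,
      (lTensor A ((LinearMap.mul' k H) ∘ₗ rTensor H f))
        ((TensorProduct.assoc k A H H).toLinearMap (w ⊗ₜ h)) =
      lTensor A ((LinearMap.mulRight k h) ∘ₗ f) w := by
    intro w
    induction w using TensorProduct.induction_on with
    | zero => simp only [zero_tmul, map_zero]
    | tmul u v =>
        simp [TensorProduct.assoc_tmul, LinearMap.mul'_apply]
    | add u v hu hv =>
        simp only [add_tmul, map_add, hu, hv]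
  simp only [gmap, coe_comp, Function.comp_apply, rTensor_tmul, AlgHom.toLinearMap_apply,
    LinearEquiv.coe_coe]
  exact key (ρ a)


lemma gmap_lTensor
    (hcoassoc : (TensorProduct.assoc k A H H).toLinearMap ∘ₗ
        (LinearMap.rTensor H ρ.toLinearMap) ∘ₗ ρ.toLinearMap
      = (LinearMap.lTensor A (Coalgebra.comul (R := k))) ∘ₗ ρ.toLinearMap)
    (f M : H →ₗ[k] H) (a : A) :
    gmap ρ f (lTensor A M (ρ a)) =
      lTensor A ((LinearMap.mul' k H) ∘ₗ rTensor H f ∘ₗ lTensor H M ∘ₗ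
        (Coalgebra.comul (R := k))) (ρ a) := by
  have e1 : rTensor H ρ.toLinearMap ∘ₗ lTensor A M
      = lTensor (A ⊗[k] H) M ∘ₗ rTensor H ρ.toLinearMap := by
    ext a h; simp
  have e2 : (TensorProduct.assoc k A H H).toLinearMap ∘ₗ lTensor (A ⊗[k] H) M
      = lTensor A (lTensor H M) ∘ₗ (TensorProduct.assoc k A H H).toLinearMap := by
    ext a h g; simp
  have e3 := LinearMap.congr_fun hcoassoc a
  simp only [coe_comp, Function.comp_apply, AlgHom.toLinearMap_apply] at e3
  calc gmap ρ f (lTensor A M (ρ a))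
      = lTensor A ((LinearMap.mul' k H) ∘ₗ rTensor H f)
          ((TensorProduct.assoc k A H H).toLinearMap
            (rTensor H ρ.toLinearMap (lTensor A M (ρ a)))) := rfl
    _ = lTensor A ((LinearMap.mul' k H) ∘ₗ rTensor H f)
          ((TensorProduct.assoc k A H H).toLinearMap
            (lTensor (A ⊗[k] H) M (rTensor H ρ.toLinearMap (ρ a)))) := by
        rw [← comp_apply, ← comp_apply (lTensor (A ⊗[k] H) M), ← e1]; rfl
    _ = lTensor A ((LinearMap.mul' k H) ∘ₗ rTensor H f)
          (lTensor A (lTensor H M)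
            ((TensorProduct.assoc k A H H).toLinearMap
              (rTensor H ρ.toLinearMap (ρ a)))) := by
        rw [← comp_apply, ← comp_apply (lTensor A (lTensor H M)), ← e2]; rfl
    _ = lTensor A ((LinearMap.mul' k H) ∘ₗ rTensor H f)
          (lTensor A (lTensor H M) (lTensor A (Coalgebra.comul (R := k)) (ρ a))) := by
        rw [e3]
    _ = lTensor A ((LinearMap.mul' k H) ∘ₗ rTensor H f ∘ₗ lTensor H M ∘ₗ
          (Coalgebra.comul (R := k))) (ρ a) := by
        rw [← comp_apply, ← lTensor_comp, ← comp_apply, ← lTensor_comp]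
        simp only [comp_assoc]


lemma inner_right (h : H) :
    (LinearMap.mul' k H) ∘ₗ rTensor H (HopfAlgebra.antipode (R := k)) ∘ₗ
        lTensor H (LinearMap.mulRight k h ∘ₗ LinearMap.id) ∘ₗ (Coalgebra.comul (R := k))
      = (LinearMap.mulRight k h) ∘ₗ (Algebra.linearMap k H) ∘ₗ (Coalgebra.counit (R := k)) := by
  have e : (LinearMap.mul' k H) ∘ₗ rTensor H (HopfAlgebra.antipode (R := k)) ∘ₗ
      lTensor H (LinearMap.mulRight k h ∘ₗ LinearMap.id)
      = LinearMap.mulRight k h ∘ₗ (LinearMap.mul' k H) ∘ₗ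
          rTensor H (HopfAlgebra.antipode (R := k)) := by
    ext u v
    simp [LinearMap.mul'_apply, mul_assoc]
  ext y
  have e' := LinearMap.congr_fun e (Coalgebra.comul (R := k) y)
  have hA := LinearMap.congr_fun (HopfAlgebra.mul_antipode_rTensor_comul (R := k) (A := H)) y
  simp only [coe_comp, Function.comp_apply] at e' hA ⊢
  rw [e', hA]

lemma inner_left (h : H) :
    (LinearMap.mul' k H) ∘ₗ rTensor H (LinearMap.id) ∘ₗ
        lTensor H (LinearMap.mulRight k h ∘ₗ HopfAlgebra.antipode (R := k)) ∘ₗ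
        (Coalgebra.comul (R := k))
      = (LinearMap.mulRight k h) ∘ₗ (Algebra.linearMap k H) ∘ₗ (Coalgebra.counit (R := k)) := by
  have e : (LinearMap.mul' k H) ∘ₗ rTensor H (LinearMap.id) ∘ₗ
      lTensor H (LinearMap.mulRight k h ∘ₗ HopfAlgebra.antipode (R := k))
      = LinearMap.mulRight k h ∘ₗ (LinearMap.mul' k H) ∘ₗ
          lTensor H (HopfAlgebra.antipode (R := k)) := by
    ext u v
    simp [LinearMap.mul'_apply, mul_assoc]
  ext y
  have e' := LinearMap.congr_fun e (Coalgebra.comul (R := k) y)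
  have hA := LinearMap.congr_fun (HopfAlgebra.mul_antipode_lTensor_comul (R := k) (A := H)) y
  simp only [coe_comp, Function.comp_apply] at e' hA ⊢
  rw [e', hA]

lemma counit_tail
    (hcounit : (TensorProduct.rid k A).toLinearMap ∘ₗ
        (LinearMap.lTensor A (Coalgebra.counit (R := k))) ∘ₗ ρ.toLinearMap = LinearMap.id)
    (a : A) :
    lTensor A (Coalgebra.counit (R := k)) (ρ a) = a ⊗ₜ (1 : k) := by
  have := LinearMap.congr_fun hcounit a
  simp only [coe_comp, Function.comp_apply, AlgHom.toLinearMap_apply, LinearEquiv.coe_coe,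
    id_coe, id_eq] at this
  have h2 := congrArg (TensorProduct.rid k A).symm this
  rwa [LinearEquiv.symm_apply_apply, TensorProduct.rid_symm_apply] at h2

lemma final_step
    (hcounit : (TensorProduct.rid k A).toLinearMap ∘ₗ
        (LinearMap.lTensor A (Coalgebra.counit (R := k))) ∘ₗ ρ.toLinearMap = LinearMap.id)
    (h : H) (a : A) :
    lTensor A ((LinearMap.mulRight k h) ∘ₗ (Algebra.linearMap k H) ∘ₗ
      (Coalgebra.counit (R := k))) (ρ a) = a ⊗ₜ h := by
  rw [lTensor_comp, lTensor_comp, comp_apply, comp_apply, counit_tail ρ hcounit]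
  simp [Algebra.linearMap_apply]


variable (hcoassoc : (TensorProduct.assoc k A H H).toLinearMap ∘ₗ
        (LinearMap.rTensor H ρ.toLinearMap) ∘ₗ ρ.toLinearMap
      = (LinearMap.lTensor A (Coalgebra.comul (R := k))) ∘ₗ ρ.toLinearMap)
    (hcounit : (TensorProduct.rid k A).toLinearMap ∘ₗ
        (LinearMap.lTensor A (Coalgebra.counit (R := k))) ∘ₗ ρ.toLinearMap = LinearMap.id)

include hcoassoc hcounit in
lemma gmap_inv1 (z : A ⊗[k] H) :
    gmap ρ (HopfAlgebra.antipode (R := k)) (gmap ρ LinearMap.id z) = z := by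
  induction z using TensorProduct.induction_on with
  | zero => simp
  | add u v hu hv => simp [hu, hv]
  | tmul a h =>
      rw [gmap_tmul, gmap_lTensor ρ hcoassoc, inner_right, final_step ρ hcounit]

include hcoassoc hcounit in
lemma gmap_inv2 (z : A ⊗[k] H) :
    gmap ρ LinearMap.id (gmap ρ (HopfAlgebra.antipode (R := k)) z) = z := by
  induction z using TensorProduct.induction_on with
  | zero => simp
  | add u v hu hv => simp [hu, hv]
  | tmul a h =>
      rw [gmap_tmul, gmap_lTensor ρ hcoassoc, inner_left, final_step ρ hcounit]

lemma lTensor_mulRight (h : H) (w : A ⊗[k] H) :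
    lTensor A (LinearMap.mulRight k h) w = w * (1 ⊗ₜ h) := by
  induction w using TensorProduct.induction_on with
  | zero => simp
  | add u v hu hv => simp [hu, hv, add_mul]
  | tmul a g => simp [Algebra.TensorProduct.tmul_mul_tmul]

lemma gmap_id_tmul (a : A) (h : H) :
    gmap ρ LinearMap.id (a ⊗ₜ h) = ρ a * (1 ⊗ₜ h) := by
  rw [gmap_tmul, comp_id, lTensor_mulRight]

lemma gmap_id_mul (z w : A ⊗[k] H) :
    gmap ρ LinearMap.id (z * w) = gmap ρ LinearMap.id z * gmap ρ LinearMap.id w := by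
  induction z using TensorProduct.induction_on with
  | zero => simp
  | add u v hu hv => simp [hu, hv, add_mul]
  | tmul a h =>
      induction w using TensorProduct.induction_on with
      | zero => simp
      | add u v hu hv => simp [hu, hv, mul_add]
      | tmul b g =>
          rw [Algebra.TensorProduct.tmul_mul_tmul, gmap_id_tmul, gmap_id_tmul, gmap_id_tmul,
            map_mul, show (1:A) ⊗ₜ[k] (h*g) = (1 ⊗ₜ[k] h) * ((1:A) ⊗ₜ[k] g) from by
              rw [Algebra.TensorProduct.tmul_mul_tmul, one_mul],
            mul_mul_mul_comm]

lemma gmap_id_rho (a : A) : gmap ρ LinearMap.id (a ⊗ₜ (1 : H)) = ρ a := by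
  rw [gmap_id_tmul, ← Algebra.TensorProduct.one_def, mul_one]


lemma assoc_symm_tmul_mul (x : A) (w : H ⊗[k] H) (p q : H) :
    (TensorProduct.assoc k A H H).symm (x ⊗ₜ (w * (p ⊗ₜ q))) =
      (TensorProduct.assoc k A H H).symm (x ⊗ₜ w) * (((1 : A) ⊗ₜ p) ⊗ₜ q) := by
  induction w using TensorProduct.induction_on with
  | zero => simp
  | add u v hu hv =>
      rw [add_mul, tmul_add, map_add, hu, hv, tmul_add, map_add, add_mul]
  | tmul u v =>
      rw [Algebra.TensorProduct.tmul_mul_tmul, TensorProduct.assoc_symm_tmul,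
        TensorProduct.assoc_symm_tmul, Algebra.TensorProduct.tmul_mul_tmul,
        Algebra.TensorProduct.tmul_mul_tmul, mul_one]

include hcoassoc in
lemma comodule_core (φ : H →ₗ[k] A)
    (hφ2 : ρ.toLinearMap ∘ₗ φ = (rTensor H φ) ∘ₗ (Coalgebra.comul (R := k)))
    (ψ : A ⊗[k] H →ₗ[k] A)
    (hψ : ∀ (x : A) (g : H), ψ (ρ x * (1 ⊗ₜ g)) = x * φ g)
    (x : A) (h : H) :
    ρ.toLinearMap (x * φ h) =
      rTensor H ψ ((TensorProduct.assoc k A H H).symm.toLinearMap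
        (lTensor A (Coalgebra.comul (R := k)) (ρ x * ((1 : A) ⊗ₜ h)))) := by
  obtain ⟨sx, hx⟩ := TensorProduct.exists_finset (ρ x)
  set r := Coalgebra.Repr.arbitrary k h with hrdef
  have hΔh : Coalgebra.comul (R := k) h = ∑ j ∈ r.index, r.left j ⊗ₜ[k] r.right j := r.eq.symm
  -- left side
  have l2 : ρ.toLinearMap (φ h) = ∑ j ∈ r.index, φ (r.left j) ⊗ₜ[k] r.right j := by
    have := LinearMap.congr_fun hφ2 h
    simp only [coe_comp, Function.comp_apply] at this
    rw [this, hΔh, map_sum]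
    simp only [rTensor_tmul]
  have lhs : ρ.toLinearMap (x * φ h) =
      ∑ p ∈ sx, ∑ j ∈ r.index, (p.1 * φ (r.left j)) ⊗ₜ[k] (p.2 * r.right j) := by
    rw [show ρ.toLinearMap (x * φ h) = ρ x * ρ.toLinearMap (φ h) from by
      simp only [AlgHom.toLinearMap_apply, map_mul], l2, hx, Finset.sum_mul_sum]
    simp only [Algebra.TensorProduct.tmul_mul_tmul]
  -- right side
  have step1 : ρ x * ((1 : A) ⊗ₜ[k] h) = ∑ p ∈ sx, p.1 ⊗ₜ[k] (p.2 * h) := by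
    rw [hx, Finset.sum_mul]
    simp only [Algebra.TensorProduct.tmul_mul_tmul, mul_one]
  have step2 : lTensor A (Coalgebra.comul (R := k)) (ρ x * ((1 : A) ⊗ₜ h)) =
      ∑ p ∈ sx, ∑ j ∈ r.index,
        p.1 ⊗ₜ[k] (Coalgebra.comul (R := k) p.2 * (r.left j ⊗ₜ[k] r.right j)) := by
    rw [step1, map_sum]
    simp only [lTensor_tmul, Bialgebra.comul_mul, hΔh, Finset.mul_sum, tmul_sum]
  have hco : ∑ p ∈ sx, (TensorProduct.assoc k A H H).symm
        (p.1 ⊗ₜ[k] (Coalgebra.comul (R := k) p.2))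
      = ∑ p ∈ sx, (ρ p.1 : A ⊗[k] H) ⊗ₜ[k] p.2 := by
    have h1 := LinearMap.congr_fun hcoassoc x
    simp only [coe_comp, Function.comp_apply, AlgHom.toLinearMap_apply, LinearEquiv.coe_coe]
      at h1
    have h2 : (TensorProduct.assoc k A H H).symm
        (lTensor A (Coalgebra.comul (R := k)) (ρ x)) = rTensor H ρ.toLinearMap (ρ x) := by
      rw [← h1, LinearEquiv.symm_apply_apply]
    calc ∑ p ∈ sx, (TensorProduct.assoc k A H H).symm
          (p.1 ⊗ₜ[k] (Coalgebra.comul (R := k) p.2))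
        = (TensorProduct.assoc k A H H).symm
            (lTensor A (Coalgebra.comul (R := k)) (ρ x)) := by
          rw [hx, map_sum, map_sum]
          simp only [lTensor_tmul]
      _ = rTensor H ρ.toLinearMap (ρ x) := h2
      _ = ∑ p ∈ sx, (ρ p.1 : A ⊗[k] H) ⊗ₜ[k] p.2 := by
          rw [hx, map_sum]
          simp only [rTensor_tmul, AlgHom.toLinearMap_apply]
  have step3 : (TensorProduct.assoc k A H H).symm.toLinearMap
        (lTensor A (Coalgebra.comul (R := k)) (ρ x * ((1 : A) ⊗ₜ h)))
      = ∑ j ∈ r.index, ∑ p ∈ sx,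
          ((ρ p.1 * ((1 : A) ⊗ₜ[k] r.left j)) ⊗ₜ[k] (p.2 * r.right j)) := by
    rw [step2]
    simp only [map_sum, LinearEquiv.coe_toLinearMap, assoc_symm_tmul_mul]
    rw [Finset.sum_comm]
    refine Finset.sum_congr rfl fun j _ => ?_
    rw [← Finset.sum_mul, hco, Finset.sum_mul]
    refine Finset.sum_congr rfl fun p _ => ?_
    rw [Algebra.TensorProduct.tmul_mul_tmul]
  rw [lhs, step3, map_sum]
  simp only [map_sum, rTensor_tmul, hψ]
  rw [Finset.sum_comm]

lemma mul_phi_tail (φ : H →ₗ[k] A) (a : A) (w : A ⊗[k] H) :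
    LinearMap.mul' k A (lTensor A φ (w * (a ⊗ₜ (1 : H)))) =
      LinearMap.mul' k A (lTensor A φ w) * a := by
  induction w using TensorProduct.induction_on with
  | zero => simp
  | add u v hu hv => simp [add_mul, hu, hv]
  | tmul x g =>
      rw [Algebra.TensorProduct.tmul_mul_tmul, lTensor_tmul, lTensor_tmul,
        LinearMap.mul'_apply, LinearMap.mul'_apply, mul_one, mul_right_comm]

end Aux

/-- Let `H` be a commutative Hopf algebra over a field `k` and `A` a right `H`-comodule algebra
with structure map `ρ : A → A ⊗ H`.  Then there exists a total integral `φ : H → A`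
(a unital `H`-comodule map) if and only if there exists a `k`-linear map `ψ : A ⊗ H → A` which
is a morphism of right `A`-modules and of right `H`-comodules and satisfies `ψ ∘ ρ = id`. -/
theorem stmt10 (k H A : Type*) [Field k] [CommRing H] [HopfAlgebra k H]
    [CommRing A] [Algebra k A]
    (ρ : A →ₐ[k] A ⊗[k] H)
    (hcoassoc : (TensorProduct.assoc k A H H).toLinearMap ∘ₗ
        (LinearMap.rTensor H ρ.toLinearMap) ∘ₗ ρ.toLinearMap
      = (LinearMap.lTensor A (Coalgebra.comul (R := k))) ∘ₗ ρ.toLinearMap)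
    (hcounit : (TensorProduct.rid k A).toLinearMap ∘ₗ
        (LinearMap.lTensor A (Coalgebra.counit (R := k))) ∘ₗ ρ.toLinearMap = LinearMap.id) :
    (∃ φ : H →ₗ[k] A, φ 1 = 1 ∧
        ρ.toLinearMap ∘ₗ φ = (LinearMap.rTensor H φ) ∘ₗ (Coalgebra.comul (R := k))) ↔
    (∃ ψ : A ⊗[k] H →ₗ[k] A,
        (∀ (z : A ⊗[k] H) (a : A), ψ (z * ρ a) = ψ z * a) ∧
        (ρ.toLinearMap ∘ₗ ψ = (LinearMap.rTensor H ψ) ∘ₗ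
          (TensorProduct.assoc k A H H).symm.toLinearMap ∘ₗ
          (LinearMap.lTensor A (Coalgebra.comul (R := k)))) ∧
        ψ ∘ₗ ρ.toLinearMap = LinearMap.id) := by
  constructor
  · rintro ⟨φ, hφ1, hφ2⟩
    refine ⟨(LinearMap.mul' k A) ∘ₗ (LinearMap.lTensor A φ) ∘ₗ
      gmap ρ (HopfAlgebra.antipode (R := k)), ?_, ?_, ?_⟩
    case _ =>
      -- some shared facts
      intro z a
      have hz : z = gmap ρ LinearMap.id (gmap ρ (HopfAlgebra.antipode (R := k)) z) :=
        (gmap_inv2 ρ hcoassoc hcounit z).symm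
      have ha : ρ a = gmap ρ LinearMap.id (a ⊗ₜ (1 : H)) := (gmap_id_rho ρ a).symm
      simp only [LinearMap.coe_comp, Function.comp_apply]
      conv_lhs => rw [hz, ha, ← gmap_id_mul, gmap_inv1 ρ hcoassoc hcounit]
      conv_rhs => rw [hz, gmap_inv1 ρ hcoassoc hcounit]
      exact mul_phi_tail φ a _
    case _ =>
      apply LinearMap.ext; intro z
      have hψρ1 : ∀ (x : A) (g : H),
          ((LinearMap.mul' k A) ∘ₗ (LinearMap.lTensor A φ) ∘ₗ
            gmap ρ (HopfAlgebra.antipode (R := k))) (ρ x * ((1 : A) ⊗ₜ g)) = x * φ g := by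
        intro x g
        rw [← gmap_id_tmul]
        simp only [LinearMap.coe_comp, Function.comp_apply, gmap_inv1 ρ hcoassoc hcounit]
        rw [LinearMap.lTensor_tmul, LinearMap.mul'_apply]
      rw [show z = gmap ρ LinearMap.id (gmap ρ (HopfAlgebra.antipode (R := k)) z) from
        (gmap_inv2 ρ hcoassoc hcounit z).symm]
      generalize gmap ρ (HopfAlgebra.antipode (R := k)) z = w
      induction w using TensorProduct.induction_on with
      | zero => simp
      | add u v hu hv => simp only [map_add, hu, hv]
      | tmul x h =>
          simp only [LinearMap.coe_comp, Function.comp_apply, gmap_id_tmul]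
          have hx1 := hψρ1 x h
          simp only [LinearMap.coe_comp, Function.comp_apply] at hx1
          rw [hx1]
          exact comodule_core ρ hcoassoc φ hφ2 _
            (fun x g => hψρ1 x g) x h
    case _ =>
      apply LinearMap.ext; intro a
      have h1 : ρ a * ((1 : A) ⊗ₜ[k] (1 : H)) = ρ.toLinearMap a := by
        rw [← Algebra.TensorProduct.one_def, mul_one, AlgHom.toLinearMap_apply]
      simp only [LinearMap.coe_comp, Function.comp_apply, LinearMap.id_coe, id_eq]
      rw [← h1, ← gmap_id_tmul]
      simp only [gmap_inv1 ρ hcoassoc hcounit]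
      rw [LinearMap.lTensor_tmul, LinearMap.mul'_apply, hφ1, mul_one]
  · rintro ⟨ψ, hmod, hcom, hid⟩
    refine ⟨ψ ∘ₗ (TensorProduct.mk k A H 1), ?_, ?_⟩
    · have h1 := LinearMap.congr_fun hid 1
      simp only [LinearMap.coe_comp, Function.comp_apply, AlgHom.toLinearMap_apply, map_one,
        LinearMap.id_coe, id_eq] at h1
      simpa [Algebra.TensorProduct.one_def] using h1
    · apply LinearMap.ext; intro h
      have hc := LinearMap.congr_fun hcom ((1 : A) ⊗ₜ[k] h)
      simp only [LinearMap.coe_comp, Function.comp_apply] at hc ⊢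
      rw [TensorProduct.mk_apply, hc]
      set r := Coalgebra.Repr.arbitrary k h with hrdef
      have hΔh : Coalgebra.comul (R := k) h = ∑ j ∈ r.index, r.left j ⊗ₜ[k] r.right j :=
        r.eq.symm
      rw [LinearMap.lTensor_tmul, hΔh, TensorProduct.tmul_sum, map_sum, map_sum, map_sum]
      simp only [LinearEquiv.coe_toLinearMap, TensorProduct.assoc_symm_tmul,
        LinearMap.rTensor_tmul, LinearMap.coe_comp, Function.comp_apply,
        TensorProduct.mk_apply]
end
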